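/- arXiv:1806.07625 — 6 statements merged into one kernel-verified Lean document; each statement's English description precedes it below -/
import Mathlib

section
/- In a rooted phylogenetic network, a reticulate node is visible if and only if its unique child is a leaf, a visible tree node, or a visible redundant node. -/
open Relation

variable {V : Type*}

/-- Indegree of a node in a digraph given by an edge relation. -/
noncomputable def indeg (E : V → V → Prop) (v : V) : ℕ := Set.ncard {u | E u v}

/-- Outdegree of a node in a digraph given by an edge relation. -/
noncomputable def outdeg (E : V → V → Prop) (v : V) : ℕ := Set.ncard {w | E v w}

/-- A directed path from `x` to `y` in the digraph `E`, recorded as the list of its nodes. -/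
def IsDirPathE (E : V → V → Prop) (x y : V) (p : List V) : Prop :=
  p.head? = some x ∧ p.getLast? = some y ∧ p.Chain' E

/-- `Dom E root x y`: `x` is a dominator of `y`, i.e. `x` is an ancestor of `y` and every
directed path from `root` to `y` contains `x`. -/
def Dom (E : V → V → Prop) (root x y : V) : Prop :=
  Relation.TransGen E x y ∧ ∀ p, IsDirPathE E root y p → x ∈ p

/-- A rooted phylogenetic network: a rooted acyclic digraph with a unique root of indegree 0
and outdegree ≥ 1, in which every non-root node has indegree 1 or outdegree 1, and every node
is reachable from the root. -/
structure RPN (V : Type*) [Fintype V] where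
  E : V → V → Prop
  root : V
  acyclic : ∀ v, ¬ Relation.TransGen E v v
  root_indeg : indeg E root = 0
  root_outdeg : 1 ≤ outdeg E root
  degree_cond : ∀ v, v ≠ root → indeg E v = 1 ∨ outdeg E v = 1
  reachable : ∀ v, Relation.ReflTransGen E root v

namespace RPN

variable [Fintype V] (N : RPN V)

/-- A leaf: indegree 1 and outdegree 0. -/
def isLeaf (v : V) : Prop := indeg N.E v = 1 ∧ outdeg N.E v = 0

/-- A reticulate node: indegree at least 2. -/
def isRetic (v : V) : Prop := 2 ≤ indeg N.E v

/-- A tree node: the root, or a node of indegree 1 and outdegree at least 2. -/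
def isTreeN (v : V) : Prop := v = N.root ∨ (indeg N.E v = 1 ∧ 2 ≤ outdeg N.E v)

/-- A redundant node: indegree 1 and outdegree 1. -/
def isRedund (v : V) : Prop := indeg N.E v = 1 ∧ outdeg N.E v = 1

/-- A directed path from `x` to `y` in `N`. -/
def IsDirPath (x y : V) (p : List V) : Prop := IsDirPathE N.E x y p

/-- `x` lies on every directed path from the root to `y`. -/
def Dominates (x y : V) : Prop := ∀ p, N.IsDirPath N.root y p → x ∈ p

/-- A node is visible if it lies on every root-to-`ℓ` path for some leaf `ℓ`. -/
def Visible (x : V) : Prop := ∃ ℓ, N.isLeaf ℓ ∧ N.Dominates x ℓ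

/-- Tree-child: every non-leaf node has a child that is a leaf, a tree node, or a redundant
node. -/
def TreeChild : Prop :=
  ∀ u, ¬ N.isLeaf u → ∃ c, N.E u c ∧ (N.isLeaf c ∨ N.isTreeN c ∨ N.isRedund c)

/-- Edge of the subgraph induced by the tree nodes. -/
def treeE (u v : V) : Prop := N.E u v ∧ N.isTreeN u ∧ N.isTreeN v

/-- Undirected adjacency in the subgraph induced by the tree nodes. -/
def treeAdj (u v : V) : Prop := N.isTreeN u ∧ N.isTreeN v ∧ (N.E u v ∨ N.E v u)

/-- The tree-node component of a tree node `u`. -/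
def treeComp (u : V) : Set V := {v | Relation.ReflTransGen N.treeAdj u v}

/-- Edge of the subgraph induced by the reticulate nodes. -/
def reticE (u v : V) : Prop := N.E u v ∧ N.isRetic u ∧ N.isRetic v

/-- Undirected adjacency in the subgraph induced by the reticulate nodes. -/
def reticAdj (u v : V) : Prop := N.isRetic u ∧ N.isRetic v ∧ (N.E u v ∨ N.E v u)

/-- The reticulation component of a reticulate node `u`. -/
def reticComp (u : V) : Set V := {v | Relation.ReflTransGen N.reticAdj u v}

open Classical in
/-- The compression quotient map: each tree node is sent to its tree-node component, each
reticulate node to its reticulation component, and every other node to itself (as a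
singleton set). -/
noncomputable def comp (u : V) : Set V :=
  if N.isTreeN u then N.treeComp u else if N.isRetic u then N.reticComp u else {u}

/-- Edge relation of the compression `N̄`: an edge between the (distinct) images of the
endpoints of each edge of `N`. -/
def compE (A B : Set V) : Prop :=
  A ≠ B ∧ ∃ u v, N.E u v ∧ N.comp u = A ∧ N.comp v = B

/-- `N` is binary: reticulate nodes have indegree exactly 2, tree nodes outdegree exactly 2. -/
def Binary : Prop :=
  (∀ v, N.isRetic v → indeg N.E v = 2) ∧ (∀ v, N.isTreeN v → outdeg N.E v = 2)

/-- `N` is galled: every reticulate node `r` has a tree-node ancestor `w` with two internally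
disjoint directed paths from `w` to `r` in which all nodes except `r` are tree nodes. -/
def Galled : Prop :=
  ∀ r, N.isRetic r → ∃ w p q, N.isTreeN w ∧
    N.IsDirPath w r p ∧ N.IsDirPath w r q ∧ p ≠ q ∧
    (∀ x ∈ p.tail.dropLast, x ∉ q.tail.dropLast) ∧
    (∀ x ∈ p, x ≠ r → N.isTreeN x) ∧ (∀ x ∈ q, x ≠ r → N.isTreeN x)

/-- The spanning subgraph determined by a switching `s` choosing one parent of each
reticulate node. -/
def SpanE (s : V → V) (u v : V) : Prop := N.E u v ∧ (N.isRetic v → u = s v)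

/-- `S` is displayed (as a softwired cluster) at `u`: for some switching, the set of leaves
below `u` in the resulting spanning tree is exactly `S`. -/
def DisplayedAt (S : Set V) (u : V) : Prop :=
  ∃ s : V → V, (∀ v, N.isRetic v → N.E (s v) v) ∧
    {ℓ | N.isLeaf ℓ ∧ Relation.ReflTransGen (N.SpanE s) u ℓ} = S

/-- An isolated reticulate node: neither its parents nor its child are reticulate. -/
def IsolatedRetic (w : V) : Prop :=
  N.isRetic w ∧ (∀ x, N.E x w → ¬ N.isRetic x) ∧ (∀ y, N.E w y → ¬ N.isRetic y)

end RPN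

section Aux

variable {V : Type*} {E : V → V → Prop}

lemma dirpath_of_rtg {x y : V} (h : Relation.ReflTransGen E x y) :
    ∃ p, IsDirPathE E x y p := by
  induction h with
  | refl => exact ⟨[x], rfl, rfl, List.isChain_singleton x⟩
  | @tail b c hab hbc ih =>
    obtain ⟨p, h1, h2, h3⟩ := ih
    refine ⟨p ++ [c], ?_, List.getLast?_concat, ?_⟩
    · cases p with
      | nil => simp at h1
      | cons a t => simpa using h1
    · unfold List.Chain'; rw [List.isChain_append]
      refine ⟨h3, List.isChain_singleton c, ?_⟩
      intro a ha y hy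
      rw [h2] at ha
      simp at ha hy
      subst ha hy
      exact hbc

lemma dirpath_split {x y v : V} {p : List V} (h : IsDirPathE E x y p) (hv : v ∈ p) :
    ∃ p₁ p₂, p = p₁ ++ v :: p₂ ∧ IsDirPathE E x v (p₁ ++ [v]) ∧ IsDirPathE E v y (v :: p₂) := by
  obtain ⟨s, t, rfl⟩ := List.append_of_mem hv
  obtain ⟨h1, h2, h3⟩ := h
  unfold List.Chain' at h3; rw [List.isChain_split] at h3
  refine ⟨s, t, rfl, ⟨?_, List.getLast?_concat, h3.1⟩, ⟨rfl, ?_, h3.2⟩⟩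
  · cases s with
    | nil => simpa using h1
    | cons a t' => simpa using h1
  · rw [List.getLast?_append] at h2
    simpa using h2

lemma dirpath_concat {x u c y : V} {p q : List V} (hp : IsDirPathE E x u p) (huc : E u c)
    (hq : IsDirPathE E c y q) : IsDirPathE E x y (p ++ q) := by
  obtain ⟨h1, h2, h3⟩ := hp
  obtain ⟨g1, g2, g3⟩ := hq
  have hqne : q ≠ [] := by rintro rfl; simp at g1
  refine ⟨?_, ?_, ?_⟩
  · cases p with
    | nil => simp at h1
    | cons a t => simpa using h1
  · rw [List.getLast?_append, g2]; rfl
  · unfold List.Chain'; rw [List.isChain_append]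
    refine ⟨h3, g3, ?_⟩
    intro a ha b hb
    rw [h2] at ha; rw [g1] at hb
    simp at ha hb; subst ha; subst hb; exact huc

lemma path_pred {c : V} : ∀ (p : List V), p.Chain' E → c ∈ p → ∀ x, p.head? = some x → c ≠ x →
    ∃ u ∈ p, E u c := by
  intro p
  induction p with
  | nil => intro _ h; simp at h
  | cons a t ih =>
    intro hch hmem x hhead hne
    simp at hhead; subst hhead
    have hct : c ∈ t := by
      rcases List.mem_cons.mp hmem with rfl | h
      · exact absurd rfl hne
      · exact h
    cases t with
    | nil => simp at hct
    | cons b t' =>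
      unfold List.Chain' at hch; rw [List.isChain_cons_cons] at hch
      by_cases hcb : c = b
      · subst hcb; exact ⟨a, List.mem_cons_self, hch.1⟩
      · obtain ⟨u, hu, hE⟩ := ih hch.2 hct b rfl hcb
        exact ⟨u, List.mem_cons_of_mem _ hu, hE⟩

lemma path_succ {y v : V} : ∀ (p : List V), p.Chain' E → v ∈ p → p.getLast? = some y → v ≠ y →
    ∃ w ∈ p, E v w := by
  intro p
  induction p with
  | nil => intro _ h; simp at h
  | cons a t ih =>
    intro hch hmem hlast hne
    cases t with
    | nil =>
      simp at hmem hlast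
      subst hmem; subst hlast
      exact absurd rfl hne
    | cons b t' =>
      unfold List.Chain' at hch; rw [List.isChain_cons_cons] at hch
      rcases List.mem_cons.mp hmem with rfl | h
      · exact ⟨b, List.mem_cons_of_mem _ (List.mem_cons_self), hch.1⟩
      · have hlast' : (b :: t').getLast? = some y := by
          rw [List.getLast?_cons_cons] at hlast; exact hlast
        obtain ⟨w, hw, hE⟩ := ih hch.2 h hlast' hne
        exact ⟨w, List.mem_cons_of_mem _ hw, hE⟩

lemma rtg_of_dirpath {y : V} : ∀ {x : V} (p : List V), IsDirPathE E x y p →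
    Relation.ReflTransGen E x y := by
  intro x p
  induction p generalizing x with
  | nil => intro h; simp [IsDirPathE] at h
  | cons a t ih =>
    rintro ⟨h1, h2, h3⟩
    simp at h1; subst h1
    cases t with
    | nil => simp at h2; subst h2; exact Relation.ReflTransGen.refl
    | cons b t' =>
      unfold List.Chain' at h3; rw [List.isChain_cons_cons] at h3
      rw [List.getLast?_cons_cons] at h2
      exact Relation.ReflTransGen.head h3.1 (ih ⟨rfl, h2, h3.2⟩)

lemma tg_of_dirpath {x y : V} {p : List V} (h : IsDirPathE E x y p) (hne : x ≠ y) :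
    Relation.TransGen E x y := by
  rcases (rtg_of_dirpath p h).cases_tail with h' | ⟨b, hb, hE⟩
  · exact absurd h'.symm hne
  · exact Relation.TransGen.tail' hb hE

end Aux

lemma mem_of_getLast?_eq {p : List V} {y : V} (h : p.getLast? = some y) : y ∈ p := by
  obtain ⟨hne, rfl⟩ := List.mem_getLast?_eq_getLast (by rw [h]; exact rfl)
  exact List.getLast_mem hne

/-- A reticulate node is visible if and only if its unique child is a leaf, a
visible tree node, or a visible redundant node. -/
theorem stmt3 [Fintype V] (N : RPN V) (v c : V) (hv : N.isRetic v) (hc : N.E v c) :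
    N.Visible v ↔
      (N.isLeaf c ∨ (N.isTreeN c ∧ N.Visible c) ∨ (N.isRedund c ∧ N.Visible c)) := by
  classical
  unfold RPN.isRetic at hv
  have hvroot : v ≠ N.root := by
    intro h; have h0 := N.root_indeg; rw [← h] at h0; omega
  have hout : outdeg N.E v = 1 := by
    rcases N.degree_cond v hvroot with h | h
    · omega
    · exact h
  have hchild : ∀ w, N.E v w → w = c := by
    intro w hw
    obtain ⟨a, ha⟩ := Set.ncard_eq_one.mp hout
    have h1 : w ∈ ({a} : Set V) := ha ▸ hw
    have h2 : c ∈ ({a} : Set V) := ha ▸ hc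
    simp at h1 h2; rw [h1, h2]
  have hvc : v ≠ c := by
    rintro rfl; exact N.acyclic v (Relation.TransGen.single hc)
  have hindc : indeg N.E c ≠ 0 := by
    intro h
    have h0 : {u | N.E u c} = ∅ := (Set.ncard_eq_zero (Set.toFinite _)).mp h
    exact absurd (h0 ▸ hc : v ∈ (∅ : Set V)) (by simp)
  have hcroot : c ≠ N.root := by
    intro h; rw [h] at hindc; exact hindc N.root_indeg
  -- backward helper: if indeg c = 1 then visibility transfers from c to v
  have hback : indeg N.E c = 1 → ∀ ℓ, N.isLeaf ℓ → N.Dominates c ℓ → N.Visible v := by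
    intro hideg ℓ hl hcdom
    have hpar : ∀ u, N.E u c → u = v := by
      intro u hu
      obtain ⟨a, ha⟩ := Set.ncard_eq_one.mp hideg
      have h1 : u ∈ ({a} : Set V) := ha ▸ hu
      have h2 : v ∈ ({a} : Set V) := ha ▸ hc
      simp at h1 h2; rw [h1, h2]
    refine ⟨ℓ, hl, ?_⟩
    intro p hp
    have hcp : c ∈ p := hcdom p hp
    obtain ⟨u, hu, hE⟩ := path_pred p hp.2.2 hcp N.root hp.1 hcroot
    exact (hpar u hE) ▸ hu
  constructor
  · rintro ⟨ℓ, hl, hdom⟩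
    have hlv : ℓ ≠ v := by
      intro h; rw [h] at hl; rw [hl.2] at hout; omega
    -- a path from root to ℓ
    obtain ⟨p0, hp0⟩ := dirpath_of_rtg (N.reachable ℓ)
    have hvp0 : v ∈ p0 := hdom p0 hp0
    obtain ⟨p₁, p₂, hp0eq, hpre, hsuf⟩ := dirpath_split hp0 hvp0
    -- v's successor on the suffix is c
    obtain ⟨w, hwmem, hwE⟩ := path_succ (v :: p₂) hsuf.2.2 (List.mem_cons_self)
      hsuf.2.1 (fun h => hlv h.symm)
    rw [hchild w hwE] at hwmem
    -- a path from c to ℓ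
    obtain ⟨q₁, q₂, hqeq, hqpre, hqsuf⟩ := dirpath_split hsuf hwmem
    have hvq : v ∉ c :: q₂ := by
      intro hvmem
      have htg : Relation.TransGen N.E c v := by
        obtain ⟨r₁, r₂, hreq, hrpre, hrsuf⟩ := dirpath_split hqsuf hvmem
        exact tg_of_dirpath hrpre (fun h => hvc h.symm)
      exact N.acyclic c (htg.tail hc)
    -- c is not reticulate
    have hic : indeg N.E c = 1 := by
      by_contra hne
      have h2 : 2 ≤ indeg N.E c := by omega
      obtain ⟨u, hu, huv⟩ := Set.exists_ne_of_one_lt_ncard (by exact h2) v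
      have huc : N.E u c := hu
      have hcu : c ≠ u := by
        rintro rfl; exact N.acyclic c (Relation.TransGen.single huc)
      obtain ⟨pu, hpu⟩ := dirpath_of_rtg (N.reachable u)
      have hvpu : v ∉ pu := by
        intro hvmem
        obtain ⟨s₁, s₂, hseq, hspre, hssuf⟩ := dirpath_split hpu hvmem
        have hvu : v ≠ u := fun h => huv h.symm
        obtain ⟨w', hw'mem, hw'E⟩ := path_succ (v :: s₂) hssuf.2.2 (List.mem_cons_self)
          hssuf.2.1 hvu
        rw [hchild w' hw'E] at hw'mem
        obtain ⟨t₁, t₂, hteq, htpre, htsuf⟩ := dirpath_split hssuf hw'mem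
        exact N.acyclic c ((tg_of_dirpath htsuf hcu).tail huc)
      have hbig := dirpath_concat hpu huc hqsuf
      have := hdom _ hbig
      rw [List.mem_append] at this
      rcases this with h | h
      · exact hvpu h
      · exact hvq h
    -- v dominates ℓ implies c dominates ℓ
    have hcdom : N.Dominates c ℓ := by
      intro p hp
      have hvp : v ∈ p := hdom p hp
      obtain ⟨a₁, a₂, haeq, hapre, hasuf⟩ := dirpath_split hp hvp
      obtain ⟨w', hw'mem, hw'E⟩ := path_succ (v :: a₂) hasuf.2.2 (List.mem_cons_self)
        hasuf.2.1 (fun h => hlv h.symm)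
      rw [hchild w' hw'E] at hw'mem
      rw [haeq, List.mem_append]
      exact Or.inr hw'mem
    by_cases h0 : outdeg N.E c = 0
    · exact Or.inl ⟨hic, h0⟩
    by_cases h1 : outdeg N.E c = 1
    · exact Or.inr (Or.inr ⟨⟨hic, h1⟩, ℓ, hl, hcdom⟩)
    · exact Or.inr (Or.inl ⟨Or.inr ⟨hic, by omega⟩, ℓ, hl, hcdom⟩)
  · rintro (hleaf | ⟨htree, ℓ, hl, hcdom⟩ | ⟨hred, ℓ, hl, hcdom⟩)
    · refine hback hleaf.1 c hleaf ?_
      intro p hp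
      exact mem_of_getLast?_eq hp.2.1
    · rcases htree with h | h
      · exact absurd h hcroot
      · exact hback h.1 ℓ hl hcdom
    · exact hback hred.1 ℓ hl hcdom
end

section
/- Let N be a rooted phylogenetic network with no redundant nodes, over a taxon set of size n, with p tree-node components and q reticulation components. Then p − 1 ≤ q ≤ n + p − 1. -/
open Relation

variable {V : Type*}

section Stmt6Aux

open Relation Classical

variable {V : Type*} [Fintype V] (N : RPN V)

namespace RPN

lemma indeg_pos_of_edge {u v : V} (h : N.E u v) : 1 ≤ indeg N.E v :=
  Set.ncard_pos (Set.toFinite _) |>.mpr ⟨u, h⟩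

lemma outdeg_pos_of_edge {u v : V} (h : N.E u v) : 1 ≤ outdeg N.E u :=
  Set.ncard_pos (Set.toFinite _) |>.mpr ⟨v, h⟩

lemma parent_unique {v : V} (h : indeg N.E v = 1) {a b : V}
    (ha : N.E a v) (hb : N.E b v) : a = b := by
  obtain ⟨c, hc⟩ := Set.ncard_eq_one.mp h
  have h1 : a ∈ ({c} : Set V) := hc ▸ ha
  have h2 : b ∈ ({c} : Set V) := hc ▸ hb
  simp at h1 h2; exact h1.trans h2.symm

lemma child_unique {v : V} (h : outdeg N.E v = 1) {a b : V}
    (ha : N.E v a) (hb : N.E v b) : a = b := by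
  obtain ⟨c, hc⟩ := Set.ncard_eq_one.mp h
  have h1 : a ∈ ({c} : Set V) := hc ▸ ha
  have h2 : b ∈ ({c} : Set V) := hc ▸ hb
  simp at h1 h2; exact h1.trans h2.symm

lemma no_edge_to_root {u : V} (h : N.E u N.root) : False := by
  have h0 := N.root_indeg
  have : ({w | N.E w N.root} : Set V) = ∅ :=
    (Set.ncard_eq_zero (Set.toFinite _)).mp h0
  exact absurd h (by simp [Set.eq_empty_iff_forall_notMem] at this; exact this u)

lemma retic_ne_root {v : V} (h : N.isRetic v) : v ≠ N.root := by
  intro hv; rw [hv] at h; unfold isRetic at h; rw [N.root_indeg] at h; omega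

lemma retic_outdeg {v : V} (h : N.isRetic v) : outdeg N.E v = 1 := by
  rcases N.degree_cond v (N.retic_ne_root h) with h1 | h2
  · exfalso; unfold isRetic at h; omega
  · exact h2

lemma treeN_not_retic {v : V} (h : N.isTreeN v) : ¬ N.isRetic v := by
  intro hr
  rcases h with h | h
  · exact N.retic_ne_root hr h
  · unfold isRetic at hr; omega

lemma indeg_pos_of_ne_root {v : V} (h : v ≠ N.root) : 1 ≤ indeg N.E v := by
  rcases (N.reachable v).cases_tail with h1 | ⟨c, _, hc⟩
  · exact absurd h1 h
  · exact N.indeg_pos_of_edge hc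

lemma classify_retic (hnr : ∀ v, ¬ N.isRedund v) {v w : V}
    (hv : ¬ N.isTreeN v) (hw : N.E v w) : N.isRetic v := by
  have hne : v ≠ N.root := fun h => hv (Or.inl h)
  have hi : 1 ≤ indeg N.E v := N.indeg_pos_of_ne_root hne
  have ho : 1 ≤ outdeg N.E v := N.outdeg_pos_of_edge hw
  rcases N.degree_cond v hne with h1 | h2
  · exfalso
    rcases Nat.lt_or_ge (outdeg N.E v) 2 with h | h
    · exact hnr v ⟨h1, by omega⟩
    · exact hv (Or.inr ⟨h1, h⟩)
  · show 2 ≤ indeg N.E v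
    rcases Nat.lt_or_ge (indeg N.E v) 2 with h | h
    · exact absurd (⟨by omega, h2⟩ : N.isRedund v) (hnr v)
    · exact h

lemma not_retic_indeg_le {v : V} (h : ¬ N.isRetic v) : indeg N.E v ≤ 1 := by
  unfold isRetic at h; omega

lemma treeAdj_symm : Symmetric N.treeAdj :=
  fun _ _ h => ⟨h.2.1, h.1, h.2.2.symm⟩

lemma reticAdj_symm : Symmetric N.reticAdj :=
  fun _ _ h => ⟨h.2.1, h.1, h.2.2.symm⟩

lemma treeComp_eq {a b : V} (h : ReflTransGen N.treeAdj a b) :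
    N.treeComp a = N.treeComp b := by
  ext v
  exact ⟨fun hv => ((show ReflTransGen N.treeAdj b a by haveI : Std.Symm N.treeAdj := ⟨fun _ _ hh => N.treeAdj_symm hh⟩; exact Std.Symm.symm _ _ h)).trans hv,
    fun hv => h.trans hv⟩

lemma reticComp_eq {a b : V} (h : ReflTransGen N.reticAdj a b) :
    N.reticComp a = N.reticComp b := by
  ext v
  exact ⟨fun hv => ((show ReflTransGen N.reticAdj b a by haveI : Std.Symm N.reticAdj := ⟨fun _ _ hh => N.reticAdj_symm hh⟩; exact Std.Symm.symm _ _ h)).trans hv,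
    fun hv => h.trans hv⟩

/-- A top tree node: a tree node with no tree-node parent. -/
def IsTop (t : V) : Prop := N.isTreeN t ∧ ∀ w, N.E w t → ¬ N.isTreeN w

/-- A bottom reticulate node: a reticulate node with no reticulate child. -/
def IsBot (s : V) : Prop := N.isRetic s ∧ ∀ w, N.E s w → ¬ N.isRetic w

lemma topReach {t : V} (ht : N.IsTop t) :
    ∀ {v}, ReflTransGen N.treeAdj t v → ReflTransGen N.treeE t v := by
  intro v h
  induction h with
  | refl => exact ReflTransGen.refl
  | tail hab hbc ih =>
    rename_i b c
    rcases hbc.2.2 with he | he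
    · exact ih.tail ⟨he, hbc.1, hbc.2.1⟩
    · -- he : N.E c b, c is a tree-node parent of b
      rcases ih.cases_tail with h1 | ⟨d, hd1, hd2⟩
      · exact absurd hbc.2.1 (ht.2 c (by rwa [h1] at he))
      · have hbne : b ≠ N.root := fun hb => N.no_edge_to_root (hb ▸ he)
        have hib : indeg N.E b = 1 := by
          rcases hbc.1 with h | h
          · exact absurd h hbne
          · exact h.1
        have : d = c := N.parent_unique hib hd2.1 he
        exact this ▸ hd1

lemma botReach {s : V} (hs : N.IsBot s) :
    ∀ {v}, ReflTransGen N.reticAdj s v → ReflTransGen N.reticE v s := by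
  intro v h
  induction h with
  | refl => exact ReflTransGen.refl
  | tail hab hbc ih =>
    rename_i b c
    rcases hbc.2.2 with he | he
    · -- he : N.E b c; b has retic child c
      rcases ih.cases_head with h1 | ⟨d, hd1, hd2⟩
      · exact absurd hbc.2.1 (hs.2 c (by rwa [h1] at he))
      · have hob : outdeg N.E b = 1 := N.retic_outdeg hbc.1
        have : d = c := N.child_unique hob hd1.1 he
        exact this ▸ hd2
    · -- he : N.E c b
      exact ReflTransGen.head ⟨he, hbc.2.1, hbc.1⟩ ih

lemma wf_up : WellFounded (Relation.TransGen N.E) := by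
  haveI : IsTrans V (Relation.TransGen N.E) := ⟨fun _ _ _ h1 h2 => h1.trans h2⟩
  haveI : IsIrrefl V (Relation.TransGen N.E) := ⟨fun a => N.acyclic a⟩
  exact Finite.wellFounded_of_trans_of_irrefl _

lemma wf_down : WellFounded (fun a b => Relation.TransGen N.E b a) := by
  haveI : IsTrans V (fun a b => Relation.TransGen N.E b a) :=
    ⟨fun _ _ _ h1 h2 => h2.trans h1⟩
  haveI : IsIrrefl V (fun a b => Relation.TransGen N.E b a) := ⟨fun a => N.acyclic a⟩
  exact Finite.wellFounded_of_trans_of_irrefl _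

lemma top_exists : ∀ u : V, N.isTreeN u →
    ∃ t, N.IsTop t ∧ ReflTransGen N.treeE t u := by
  intro u
  induction u using (N.wf_up).induction with
  | _ u ih =>
    intro hu
    by_cases h : ∃ w, N.E w u ∧ N.isTreeN w
    · obtain ⟨w, hw, hwt⟩ := h
      obtain ⟨t, ht, htw⟩ := ih w (Relation.TransGen.single hw) hwt
      exact ⟨t, ht, htw.tail ⟨hw, hwt, hu⟩⟩
    · exact ⟨u, ⟨hu, fun w hw hwt => h ⟨w, hw, hwt⟩⟩, ReflTransGen.refl⟩

lemma bot_exists : ∀ u : V, N.isRetic u →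
    ∃ s, N.IsBot s ∧ ReflTransGen N.reticE u s := by
  intro u
  induction u using (N.wf_down).induction with
  | _ u ih =>
    intro hu
    by_cases h : ∃ w, N.E u w ∧ N.isRetic w
    · obtain ⟨w, hw, hwt⟩ := h
      obtain ⟨s, hs, hws⟩ := ih w (Relation.TransGen.single hw) hwt
      exact ⟨s, hs, ReflTransGen.head ⟨hw, hu, hwt⟩ hws⟩
    · exact ⟨u, ⟨hu, fun w hw hwt => h ⟨w, hw, hwt⟩⟩, ReflTransGen.refl⟩

lemma rtg_treeE_E {a b : V} (h : ReflTransGen N.treeE a b) :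
    ReflTransGen N.E a b := ReflTransGen.mono (r := N.treeE) (p := N.E) (fun _ _ hh => hh.1) _ _ h

lemma rtg_reticE_E {a b : V} (h : ReflTransGen N.reticE a b) :
    ReflTransGen N.E a b := ReflTransGen.mono (r := N.reticE) (p := N.E) (fun _ _ hh => hh.1) _ _ h

lemma top_unique {t t' : V} (ht : N.IsTop t) (ht' : N.IsTop t')
    (h : ReflTransGen N.treeAdj t t') : t = t' := by
  have h1 : ReflTransGen N.treeE t t' := N.topReach ht h
  have h2 : ReflTransGen N.treeE t' t :=
    N.topReach ht' ((by haveI : Std.Symm N.treeAdj := ⟨fun _ _ hh => N.treeAdj_symm hh⟩; exact Std.Symm.symm _ _ h))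
  by_contra hne
  rcases h1.cases_head with heq | ⟨c, hc1, hc2⟩
  · exact hne heq
  · exact N.acyclic t
      (Relation.TransGen.head' hc1.1 ((N.rtg_treeE_E hc2).trans (N.rtg_treeE_E h2)))

lemma bot_unique {s s' : V} (hs : N.IsBot s) (hs' : N.IsBot s')
    (h : ReflTransGen N.reticAdj s s') : s = s' := by
  have h1 : ReflTransGen N.reticE s' s := N.botReach hs h
  have h2 : ReflTransGen N.reticE s s' :=
    N.botReach hs' ((by haveI : Std.Symm N.reticAdj := ⟨fun _ _ hh => N.reticAdj_symm hh⟩; exact Std.Symm.symm _ _ h))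
  by_contra hne
  rcases h2.cases_head with heq | ⟨c, hc1, hc2⟩
  · exact hne heq
  · exact N.acyclic s
      (Relation.TransGen.head' hc1.1 ((N.rtg_reticE_E hc2).trans (N.rtg_reticE_E h1)))

lemma rtg_treeE_adj {a b : V} (h : ReflTransGen N.treeE a b) :
    ReflTransGen N.treeAdj a b :=
  ReflTransGen.mono (r := N.treeE) (p := N.treeAdj) (fun _ _ hh => ⟨hh.2.1, hh.2.2, Or.inl hh.1⟩) _ _ h

lemma rtg_reticE_adj {a b : V} (h : ReflTransGen N.reticE a b) :
    ReflTransGen N.reticAdj a b :=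
  ReflTransGen.mono (r := N.reticE) (p := N.reticAdj) (fun _ _ hh => ⟨hh.2.1, hh.2.2, Or.inl hh.1⟩) _ _ h

lemma treeComps_eq_image :
    {C : Set V | ∃ u, N.isTreeN u ∧ C = N.treeComp u} = N.treeComp '' {t | N.IsTop t} := by
  ext C
  constructor
  · rintro ⟨u, hu, rfl⟩
    obtain ⟨t, ht, htu⟩ := N.top_exists u hu
    exact ⟨t, ht, (N.treeComp_eq (N.rtg_treeE_adj htu)).symm ▸ rfl⟩
  · rintro ⟨t, ht, rfl⟩
    exact ⟨t, ht.1, rfl⟩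

lemma reticComps_eq_image :
    {C : Set V | ∃ u, N.isRetic u ∧ C = N.reticComp u} = N.reticComp '' {s | N.IsBot s} := by
  ext C
  constructor
  · rintro ⟨u, hu, rfl⟩
    obtain ⟨s, hs, hus⟩ := N.bot_exists u hu
    exact ⟨s, hs, (N.reticComp_eq (N.rtg_reticE_adj hus)) ▸ rfl⟩
  · rintro ⟨s, hs, rfl⟩
    exact ⟨s, hs.1, rfl⟩

lemma treeComp_injOn : Set.InjOn N.treeComp {t | N.IsTop t} := by
  intro t ht t' ht' h
  apply N.top_unique ht ht'
  have : t' ∈ N.treeComp t' := ReflTransGen.refl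
  rw [← h] at this
  exact this

lemma reticComp_injOn : Set.InjOn N.reticComp {s | N.IsBot s} := by
  intro s hs s' hs' h
  apply N.bot_unique hs hs'
  have : s' ∈ N.reticComp s' := ReflTransGen.refl
  rw [← h] at this
  exact this

lemma root_isTop : N.IsTop N.root :=
  ⟨Or.inl rfl, fun w hw _ => N.no_edge_to_root hw⟩

end RPN

end Stmt6Aux

/-- If `N` has no redundant nodes, `n` leaves, `p` tree-node components and `q`
reticulation components, then `p - 1 ≤ q ≤ n + p - 1`. -/
theorem stmt6 [Fintype V] (N : RPN V) (hnr : ∀ v, ¬ N.isRedund v) (n p q : ℕ)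
    (hn : n = Set.ncard {v | N.isLeaf v})
    (hp : p = Set.ncard {C : Set V | ∃ u, N.isTreeN u ∧ C = N.treeComp u})
    (hq : q = Set.ncard {C : Set V | ∃ u, N.isRetic u ∧ C = N.reticComp u}) :
    p - 1 ≤ q ∧ q ≤ n + p - 1 := by
  classical
  haveI : Nonempty V := ⟨N.root⟩
  have hp' : p = Set.ncard {t | N.IsTop t} := by
    rw [hp, N.treeComps_eq_image, Set.ncard_image_of_injOn N.treeComp_injOn]
  have hq' : q = Set.ncard {s | N.IsBot s} := by
    rw [hq, N.reticComps_eq_image, Set.ncard_image_of_injOn N.reticComp_injOn]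
  have hrootTop : N.root ∈ {t | N.IsTop t} := N.root_isTop
  have hpcard : ({t | N.IsTop t} \ {N.root}).ncard + 1 = p := by
    rw [hp']; exact Set.ncard_diff_singleton_add_one hrootTop (Set.toFinite _)
  -- parent selector
  have hpaspec : ∀ t : V, t ≠ N.root → N.E (Classical.epsilon (fun w => N.E w t)) t := by
    intro t htne
    have h1 := N.indeg_pos_of_ne_root htne
    have hne : ∃ w, N.E w t := by
      have := (Set.ncard_pos (s := {w | N.E w t}) (Set.toFinite _)).mp (by
        unfold indeg at h1; omega)
      exact this
    exact Classical.epsilon_spec hne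
  set pa : V → V := fun t => Classical.epsilon (fun w => N.E w t) with hpadef
  -- child selector
  have hchspec : ∀ s : V, N.isRetic s → N.E s (Classical.epsilon (N.E s)) := by
    intro s hs
    have ho := N.retic_outdeg hs
    have hne : ∃ w, N.E s w := by
      have := (Set.ncard_pos (s := {w | N.E s w}) (Set.toFinite _)).mp (by
        unfold outdeg at ho; omega)
      exact this
    exact Classical.epsilon_spec hne
  set ch : V → V := fun s => Classical.epsilon (N.E s) with hchdef
  -- lower bound
  have key : ∀ t ∈ {t | N.IsTop t} \ {N.root}, N.IsBot (pa t) ∧ N.E (pa t) t := by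
    rintro t ⟨ht, htr⟩
    have htne : t ≠ N.root := by simpa using htr
    have hE : N.E (pa t) t := hpaspec t htne
    have hnt : ¬ N.isTreeN (pa t) := ht.2 _ hE
    have hret : N.isRetic (pa t) := N.classify_retic hnr hnt hE
    have ho : outdeg N.E (pa t) = 1 := N.retic_outdeg hret
    refine ⟨⟨hret, fun y hy => ?_⟩, hE⟩
    have hyt : y = t := N.child_unique ho hy hE
    subst hyt
    exact N.treeN_not_retic ht.1
  have hlowinj : Set.InjOn pa ({t | N.IsTop t} \ {N.root}) := by
    intro a ha b hb hab
    have ha' := key a ha; have hb' := key b hb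
    have ho : outdeg N.E (pa a) = 1 := N.retic_outdeg ha'.1.1
    exact N.child_unique ho ha'.2 (hab ▸ hb'.2)
  have hlow' : ({t | N.IsTop t} \ {N.root}).ncard ≤ Set.ncard {s | N.IsBot s} :=
    Set.ncard_le_ncard_of_injOn pa (fun a ha => (key a ha).1) hlowinj (Set.toFinite _)
  have hlow : p - 1 ≤ q := by omega
  -- upper bound
  have key2 : ∀ s ∈ {s | N.IsBot s},
      ch s ∈ {v | N.isLeaf v} ∪ ({t | N.IsTop t} \ {N.root}) ∧ N.E s (ch s) := by
    intro s hs
    have hE : N.E s (ch s) := hchspec s hs.1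
    have hcnr : ¬ N.isRetic (ch s) := hs.2 _ hE
    have hcne : ch s ≠ N.root := fun h => N.no_edge_to_root (h ▸ hE)
    have hic : indeg N.E (ch s) = 1 := by
      have h1 := N.indeg_pos_of_edge hE
      have h2 := N.not_retic_indeg_le hcnr
      omega
    refine ⟨?_, hE⟩
    rcases Nat.lt_or_ge (outdeg N.E (ch s)) 1 with h0 | h1
    · exact Or.inl ⟨hic, by omega⟩
    · rcases Nat.lt_or_ge (outdeg N.E (ch s)) 2 with h2 | h2
      · exact absurd (⟨hic, by omega⟩ : N.isRedund (ch s)) (hnr _)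
      · refine Or.inr ⟨⟨Or.inr ⟨hic, h2⟩, fun w hw hwt => ?_⟩, by simpa using hcne⟩
        have hws : w = s := N.parent_unique hic hw hE
        subst hws
        exact N.treeN_not_retic hwt hs.1
  have hupinj : Set.InjOn ch {s | N.IsBot s} := by
    intro a ha b hb hab
    have ha' := key2 a ha; have hb' := key2 b hb
    have hcnr : ¬ N.isRetic (ch a) := ha.2 _ ha'.2
    have hic : indeg N.E (ch a) = 1 := by
      have h1 := N.indeg_pos_of_edge ha'.2
      have h2 := N.not_retic_indeg_le hcnr
      omega
    exact N.parent_unique hic ha'.2 (hab ▸ hb'.2)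
  have hup1 : Set.ncard {s | N.IsBot s} ≤
      ({v | N.isLeaf v} ∪ ({t | N.IsTop t} \ {N.root})).ncard :=
    Set.ncard_le_ncard_of_injOn ch (fun a ha => (key2 a ha).1) hupinj (Set.toFinite _)
  have hup2 := Set.ncard_union_le {v | N.isLeaf v} ({t | N.IsTop t} \ {N.root})
  exact ⟨hlow, by omega⟩
end

section
/- Let N be a rooted phylogenetic network and let f map each node of N to its compression image (each tree node to its tree-node component, each reticulate node to its reticulation component, and each redundant node and leaf to itself). If P is a directed path in N, then the image of P under f, after removing consecutive repetitions, is a single node or a directed path in the compression of N. -/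
open Relation

variable {V : Type*}

open Classical in
private lemma stmt9_aux [Fintype V] (N : RPN V) :
    ∀ (l : List V) (u : V), List.Chain N.E u l →
      ∃ t, (l.map N.comp).destutter' Ne (N.comp u) = N.comp u :: t ∧
        List.Chain N.compE (N.comp u) t := by
  intro l
  induction l with
  | nil => intro u _; exact ⟨[], by simp [List.destutter'_nil], List.Chain.nil⟩
  | cons b l ih =>
    intro u hc
    simp only [List.Chain, List.isChain_cons_cons] at hc
    obtain ⟨hub, hc⟩ := hc
    obtain ⟨t, ht, hcht⟩ := ih b hc
    rw [List.map_cons, List.destutter'_cons]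
    by_cases h : N.comp u ≠ N.comp b
    · rw [if_pos h, ht]
      exact ⟨N.comp b :: t, rfl, List.chain_cons.mpr ⟨⟨h, u, b, hub, rfl, rfl⟩, hcht⟩⟩
    · push_neg at h
      rw [if_neg (by simp [h]), h, ht]
      exact ⟨t, rfl, h ▸ hcht⟩

open Classical in
/-- The image under the compression quotient map of a directed path of `N`,
after removing consecutive repetitions, is a single node or a directed path of the
compression. -/
theorem stmt9 [Fintype V] (N : RPN V) (x y : V) (p : List V) (hp : N.IsDirPath x y p) :
    (List.destutter Ne (p.map N.comp)).length = 1 ∨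
    (2 ≤ (List.destutter Ne (p.map N.comp)).length ∧
      (List.destutter Ne (p.map N.comp)).Chain' N.compE) := by
  obtain ⟨h1, _, h3⟩ := hp
  match p with
  | [] => simp at h1
  | a :: l =>
    have hch : List.Chain N.E a l := h3
    obtain ⟨t, ht, hcht⟩ := stmt9_aux N l a hch
    rw [List.map_cons, List.destutter_cons', ht]
    cases t with
    | nil => left; rfl
    | cons c t' =>
      right
      exact ⟨by simp, hcht⟩
end

section
/- In a reticulation-visible rooted phylogenetic network, every reticulation component consists of a single reticulate node; equivalently, no reticulate node has a reticulate parent or a reticulate child. -/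
open Relation

variable {V : Type*}

section myHelpers
variable {E : V → V → Prop} {x y z t v : V} {p q : List V}

private lemma exists_dirPath (h : Relation.ReflTransGen E x y) : ∃ p, IsDirPathE E x y p := by
  obtain ⟨l, hc, hl⟩ := List.exists_isChain_cons_of_relationReflTransGen h
  refine ⟨x :: l, rfl, ?_, hc⟩
  rw [List.getLast?_eq_getLast (l := x :: l) (List.cons_ne_nil _ _), hl]

private lemma IsDirPathE.rtg (h : IsDirPathE E x y p) : Relation.ReflTransGen E x y := by
  obtain ⟨h1, h2, h3⟩ := h
  cases p with
  | nil => simp at h1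
  | cons a l =>
    simp only [List.head?_cons, Option.some.injEq] at h1
    subst h1
    refine List.relationReflTransGen_of_exists_isChain_cons l h3 ?_
    rw [List.getLast?_eq_getLast (l := a :: l) (List.cons_ne_nil _ _)] at h2
    exact Option.some_injective _ h2

private lemma IsDirPathE.mem_split (h : IsDirPathE E x y p) (hv : v ∈ p) :
    Relation.ReflTransGen E x v ∧ Relation.ReflTransGen E v y := by
  obtain ⟨s, t, rfl⟩ := List.append_of_mem hv
  obtain ⟨h1, h2, h3⟩ := h
  constructor
  · refine IsDirPathE.rtg (p := s ++ [v]) ⟨?_, List.getLast?_concat (l := s), h3.prefix ⟨t, by simp⟩⟩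
    cases s with
    | nil => simpa using h1
    | cons a s' => simpa using h1
  · refine IsDirPathE.rtg (p := v :: t) ⟨rfl, ?_, h3.suffix ⟨s, rfl⟩⟩
    rw [List.getLast?_append] at h2
    rw [List.getLast?_eq_getLast (l := v :: t) (List.cons_ne_nil _ _)] at h2 ⊢
    exact h2

private lemma IsDirPathE.append (hp : IsDirPathE E x y p) (hq : IsDirPathE E z t q)
    (h : E y z) : IsDirPathE E x t (p ++ q) := by
  obtain ⟨hp1, hp2, hp3⟩ := hp
  obtain ⟨hq1, hq2, hq3⟩ := hq
  refine ⟨?_, ?_, ?_⟩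
  · rw [List.head?_append, hp1]; rfl
  · rw [List.getLast?_append, hq2]; rfl
  · refine List.isChain_append.mpr ⟨hp3, hq3, ?_⟩
    intro a ha b hb
    rw [hp2, Option.mem_some_iff] at ha
    rw [hq1, Option.mem_some_iff] at hb
    rw [← ha, ← hb]; exact h

private lemma no_retic_child [Fintype V] (N : RPN V)
    (hrv : ∀ u, (N.isRetic u ∨ N.isRedund u) → N.Visible u)
    {a b : V} (ha : N.isRetic a) (hab : N.E a b) (hb : N.isRetic b) : False := by
  have hvr : a ≠ N.root := by
    intro h
    have := ha
    rw [RPN.isRetic, h, N.root_indeg] at this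
    omega
  have hout : outdeg N.E a = 1 := by
    rcases N.degree_cond a hvr with h | h
    · exfalso; rw [RPN.isRetic, h] at ha; omega
    · exact h
  obtain ⟨c, hc⟩ := Set.ncard_eq_one.mp hout
  have hchild : ∀ x, N.E a x → x = b := by
    have hbc : b = c := by
      have : b ∈ {w | N.E a w} := hab
      rw [hc] at this; exact this
    intro x hx
    have : x ∈ {w | N.E a w} := hx
    rw [hc] at this
    rw [hbc]; exact this
  obtain ⟨u, huw, hune⟩ := Set.exists_ne_of_one_lt_ncard (by
    have := hb; rw [RPN.isRetic, indeg] at this; omega : 1 < Set.ncard {x | N.E x b}) a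
  obtain ⟨ℓ, hℓ, hdom⟩ := hrv a (Or.inl ha)
  have hleaf_no_out : ∀ x, ¬ N.E ℓ x := by
    intro x hx
    have h0 : {w | N.E ℓ w} = ∅ := (Set.ncard_eq_zero (Set.toFinite _)).mp hℓ.2
    have : x ∈ {w | N.E ℓ w} := hx
    rw [h0] at this; exact this
  have hane : a ≠ ℓ := by
    rintro rfl; exact hleaf_no_out b hab
  -- every root-to-ℓ path passes through a, hence through b
  have hbl : Relation.ReflTransGen N.E b ℓ := by
    obtain ⟨p, hp⟩ := exists_dirPath (N.reachable ℓ)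
    have hmem : a ∈ p := hdom p hp
    have hal : Relation.ReflTransGen N.E a ℓ := (IsDirPathE.mem_split hp hmem).2
    rcases hal.cases_head with h | ⟨d, had, hdl⟩
    · exact absurd h hane
    · rwa [← hchild d had]
  obtain ⟨p1, hp1⟩ := exists_dirPath (N.reachable u)
  obtain ⟨p2, hp2⟩ := exists_dirPath hbl
  have hq : IsDirPathE N.E N.root ℓ (p1 ++ p2) := IsDirPathE.append hp1 hp2 huw
  have hmem : a ∈ p1 ++ p2 := hdom _ hq
  rcases List.mem_append.mp hmem with h | h
  · have hau : Relation.ReflTransGen N.E a u := (IsDirPathE.mem_split hp1 h).2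
    rcases hau.cases_head with h' | ⟨d, had, hdu⟩
    · exact hune h'.symm
    · rw [hchild d had] at hdu
      exact N.acyclic b (Relation.TransGen.tail' hdu huw)
  · have hba : Relation.ReflTransGen N.E b a := (IsDirPathE.mem_split hp2 h).1
    exact N.acyclic a (Relation.TransGen.head' hab hba)

end myHelpers

/-- In a reticulation-visible network, every reticulation component is a
single reticulate node; equivalently, no reticulate node has a reticulate parent or a
reticulate child. -/
theorem stmt13 [Fintype V] (N : RPN V)
    (hrv : ∀ v, (N.isRetic v ∨ N.isRedund v) → N.Visible v) :
    ∀ v, N.isRetic v →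
      N.reticComp v = {v} ∧
      (∀ u, N.E u v → ¬ N.isRetic u) ∧ (∀ w, N.E v w → ¬ N.isRetic w) := by
  intro v hv
  refine ⟨?_, fun u hu hru => no_retic_child N hrv hru hu hv,
    fun w hw hrw => no_retic_child N hrv hv hw hrw⟩
  ext x
  simp only [RPN.reticComp, Set.mem_setOf_eq, Set.mem_singleton_iff]
  constructor
  · intro h
    rcases h.cases_head with h' | ⟨c, hc, _⟩
    · exact h'.symm
    · obtain ⟨h1, h2, h3 | h3⟩ := hc
      · exact absurd h3 fun h3 => no_retic_child N hrv h1 h3 h2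
      · exact absurd h3 fun h3 => no_retic_child N hrv h2 h3 h1
  · rintro rfl; exact Relation.ReflTransGen.refl
end

section
/- The compression of a reticulation-visible rooted phylogenetic network is a tree-child network: if every reticulate and redundant node of N is visible, then in the compression N̄ every non-leaf node has a child that is a leaf, a tree node, or a redundant node. -/
open Relation

variable {V : Type*}

namespace Stmt15Aux

open Relation RPN

set_option linter.unusedSectionVars false

variable {V : Type*} [Fintype V]

/-! ### degree basics -/

lemma outdeg_pos {E : V → V → Prop} {v w : V} (h : E v w) : 1 ≤ outdeg E v := by
  have hne : ({w' | E v w'} : Set V).Nonempty := ⟨w, h⟩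
  have := (Set.ncard_pos (Set.toFinite _)).2 hne
  unfold outdeg; omega

lemma indeg_pos {E : V → V → Prop} {v w : V} (h : E w v) : 1 ≤ indeg E v := by
  have hne : ({w' | E w' v} : Set V).Nonempty := ⟨w, h⟩
  have := (Set.ncard_pos (Set.toFinite _)).2 hne
  unfold indeg; omega

lemma no_child_of_outdeg_zero {E : V → V → Prop} {v w : V} (h : outdeg E v = 0) : ¬ E v w := by
  intro hc; have := outdeg_pos hc; omega

lemma no_parent_of_indeg_zero {E : V → V → Prop} {v w : V} (h : indeg E v = 0) : ¬ E w v := by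
  intro hc; have := indeg_pos hc; omega

lemma child_unique {E : V → V → Prop} {v a b : V} (h : outdeg E v = 1)
    (ha : E v a) (hb : E v b) : a = b := by
  obtain ⟨x, hx⟩ := Set.ncard_eq_one.1 h
  have h1 : a ∈ ({w' | E v w'} : Set V) := ha
  have h2 : b ∈ ({w' | E v w'} : Set V) := hb
  rw [hx] at h1 h2
  simp only [Set.mem_singleton_iff] at h1 h2
  rw [h1, h2]

lemma parent_unique {E : V → V → Prop} {v a b : V} (h : indeg E v = 1)
    (ha : E a v) (hb : E b v) : a = b := by
  obtain ⟨x, hx⟩ := Set.ncard_eq_one.1 h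
  have h1 : a ∈ ({w' | E w' v} : Set V) := ha
  have h2 : b ∈ ({w' | E w' v} : Set V) := hb
  rw [hx] at h1 h2
  simp only [Set.mem_singleton_iff] at h1 h2
  rw [h1, h2]

lemma exists_child {E : V → V → Prop} {v : V} (h : 1 ≤ outdeg E v) : ∃ w, E v w := by
  have : ({w' | E v w'} : Set V).Nonempty := by
    rw [← Set.ncard_pos (Set.toFinite _)]; unfold outdeg at h; omega
  exact this

/-! ### network basics -/

variable (N : RPN V)

lemma acyc {a b : V} (hab : ReflTransGen N.E a b) (hba : ReflTransGen N.E b a)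
    (hne : a ≠ b) : False := by
  rcases hab.cases_head with rfl | ⟨c, hac, hcb⟩
  · exact hne rfl
  · exact N.acyclic a (TransGen.head' hac (hcb.trans hba))

lemma retic_ne_root {v : V} (h : N.isRetic v) : v ≠ N.root := by
  intro hv; unfold RPN.isRetic at h; rw [hv, N.root_indeg] at h; omega

lemma retic_outdeg {v : V} (h : N.isRetic v) : outdeg N.E v = 1 := by
  rcases N.degree_cond v (retic_ne_root N h) with h1 | h1
  · unfold RPN.isRetic at h; omega
  · exact h1

lemma retic_not_tree {v : V} (h : N.isRetic v) : ¬ N.isTreeN v := by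
  rintro (rfl | ⟨h1, _⟩)
  · exact retic_ne_root N h rfl
  · unfold RPN.isRetic at h; omega

lemma leaf_not_tree {v : V} (h : N.isLeaf v) : ¬ N.isTreeN v := by
  obtain ⟨_, h0⟩ := h
  rintro (rfl | ⟨_, h2⟩)
  · have := N.root_outdeg; omega
  · omega

lemma leaf_not_retic {v : V} (h : N.isLeaf v) : ¬ N.isRetic v := by
  obtain ⟨h1, _⟩ := h; unfold RPN.isRetic; omega

lemma root_tree : N.isTreeN N.root := Or.inl rfl

lemma nonroot_has_parent {v : V} (h : v ≠ N.root) : ∃ u, N.E u v := by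
  rcases (N.reachable v).cases_tail with h1 | ⟨c, _, hcv⟩
  · exact absurd h1 h
  · exact ⟨c, hcv⟩

lemma indeg_one_of_not_retic {v : V} (h : v ≠ N.root) (hr : ¬ N.isRetic v) :
    indeg N.E v = 1 := by
  obtain ⟨u, hu⟩ := nonroot_has_parent N h
  have := indeg_pos hu
  unfold RPN.isRetic at hr; omega

/-! ### components -/

lemma treeAdj_symm : Symmetric N.treeAdj := by
  rintro a b ⟨h1, h2, h3⟩; exact ⟨h2, h1, h3.symm⟩

lemma reticAdj_symm : Symmetric N.reticAdj := by
  rintro a b ⟨h1, h2, h3⟩; exact ⟨h2, h1, h3.symm⟩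

lemma mem_treeComp_tree {u v : V} (hu : N.isTreeN u) (hv : v ∈ N.treeComp u) :
    N.isTreeN v := by
  rcases hv.cases_tail with rfl | ⟨c, _, hcv⟩
  · exact hu
  · exact hcv.2.1

lemma mem_reticComp_retic {u v : V} (hu : N.isRetic u) (hv : v ∈ N.reticComp u) :
    N.isRetic v := by
  rcases hv.cases_tail with rfl | ⟨c, _, hcv⟩
  · exact hu
  · exact hcv.2.1

lemma treeComp_eq {u v : V} (hv : v ∈ N.treeComp u) : N.treeComp v = N.treeComp u := by
  have hvu : ReflTransGen N.treeAdj v u := by haveI : Std.Symm N.treeAdj := ⟨fun a b h => treeAdj_symm N h⟩; exact Std.Symm.symm _ _ hv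
  ext m
  exact ⟨fun h => ReflTransGen.trans hv h, fun h => ReflTransGen.trans hvu h⟩

lemma reticComp_eq {u v : V} (hv : v ∈ N.reticComp u) : N.reticComp v = N.reticComp u := by
  have hvu : ReflTransGen N.reticAdj v u := by haveI : Std.Symm N.reticAdj := ⟨fun a b h => reticAdj_symm N h⟩; exact Std.Symm.symm _ _ hv
  ext m
  exact ⟨fun h => ReflTransGen.trans hv h, fun h => ReflTransGen.trans hvu h⟩

lemma comp_of_tree {u : V} (h : N.isTreeN u) : N.comp u = N.treeComp u := by
  unfold RPN.comp; rw [if_pos h]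

lemma comp_of_retic {u : V} (h : N.isRetic u) : N.comp u = N.reticComp u := by
  unfold RPN.comp; rw [if_neg (retic_not_tree N h), if_pos h]

lemma comp_of_other {u : V} (h1 : ¬ N.isTreeN u) (h2 : ¬ N.isRetic u) :
    N.comp u = {u} := by
  unfold RPN.comp; rw [if_neg h1, if_neg h2]

lemma mem_comp_self (u : V) : u ∈ N.comp u := by
  unfold RPN.comp
  split
  · exact ReflTransGen.refl
  · split
    · exact ReflTransGen.refl
    · exact rfl

lemma comp_eq_of_mem_treeComp {u v : V} (hu : N.isTreeN u) (hv : v ∈ N.treeComp u) :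
    N.comp v = N.treeComp u := by
  rw [comp_of_tree N (mem_treeComp_tree N hu hv), treeComp_eq N hv]

lemma comp_eq_of_mem_reticComp {u v : V} (hu : N.isRetic u) (hv : v ∈ N.reticComp u) :
    N.comp v = N.reticComp u := by
  rw [comp_of_retic N (mem_reticComp_retic N hu hv), reticComp_eq N hv]

/-! ### well-foundedness -/

lemma wf_above : WellFounded (fun a b : V => TransGen N.E a b) := by
  letI : IsTrans V (fun a b : V => TransGen N.E a b) := ⟨fun _ _ _ h1 h2 => h1.trans h2⟩
  letI : IsIrrefl V (fun a b : V => TransGen N.E a b) := ⟨N.acyclic⟩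
  exact Finite.wellFounded_of_trans_of_irrefl _

lemma wf_below : WellFounded (fun a b : V => TransGen N.E b a) := by
  letI : IsTrans V (fun a b : V => TransGen N.E b a) := ⟨fun _ _ _ h1 h2 => h2.trans h1⟩
  letI : IsIrrefl V (fun a b : V => TransGen N.E b a) := ⟨N.acyclic⟩
  exact Finite.wellFounded_of_trans_of_irrefl _

end Stmt15Aux
namespace Stmt15Aux

open Relation RPN

set_option linter.unusedSectionVars false
set_option maxHeartbeats 1000000

variable {V : Type*} [Fintype V] (N : RPN V)

/-! ### Exit machinery -/

/-- edge within reticulate nodes -/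
def Ret (a b : V) : Prop := N.E a b ∧ N.isRetic a ∧ N.isRetic b

/-- `c` is the first non-reticulate node reached from the reticulate node `z`
by following unique children. -/
def Exit (z c : V) : Prop :=
  ∃ r, ReflTransGen (Ret N) z r ∧ N.E r c ∧ ¬ N.isRetic c

lemma exit_reach {z c : V} (h : Exit N z c) : ReflTransGen N.E z c := by
  obtain ⟨r, h1, h2, _⟩ := h
  exact (ReflTransGen.mono (fun a b hab => hab.1) _ _ h1).tail h2

lemma exit_exists {z : V} (h : N.isRetic z) : ∃ c, Exit N z c := by
  induction z using (wf_below N).induction with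
  | _ z ih =>
    obtain ⟨w, hw⟩ := exists_child (by rw [retic_outdeg N h] : 1 ≤ outdeg N.E z)
    by_cases hwr : N.isRetic w
    · obtain ⟨c, r, h1, h2, h3⟩ := ih w (TransGen.single hw) hwr
      exact ⟨c, r, ReflTransGen.head ⟨hw, h, hwr⟩ h1, h2, h3⟩
    · exact ⟨w, z, ReflTransGen.refl, hw, hwr⟩

lemma exit_tail {q w c : V} (hq : N.isRetic q) (hw : N.E q w) (h : Exit N q c) :
    (¬ N.isRetic w → w = c) ∧ (N.isRetic w → Exit N w c) := by
  obtain ⟨r, h1, h2, h3⟩ := h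
  have hout := retic_outdeg N hq
  rcases h1.cases_head with rfl | ⟨m, hqm, hmr⟩
  · have hwc : w = c := child_unique hout hw h2
    exact ⟨fun _ => hwc, fun hwr => absurd (hwc ▸ hwr) h3⟩
  · have hmw : m = w := child_unique hout hqm.1 hw
    subst hmw
    exact ⟨fun hnr => absurd hqm.2.2 hnr, fun _ => ⟨r, hmr, h2, h3⟩⟩

lemma exit_of_edge {a b c : V} (hab : N.E a b) (ha : N.isRetic a) (hb : N.isRetic b) :
    (Exit N a c ↔ Exit N b c) := by
  constructor
  · intro h; exact (exit_tail N ha hab h).2 hb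
  · rintro ⟨r, h1, h2, h3⟩; exact ⟨r, ReflTransGen.head ⟨hab, ha, hb⟩ h1, h2, h3⟩

lemma exit_invariant {y z c : V} (h : ReflTransGen N.reticAdj y z) (he : Exit N y c) :
    Exit N z c := by
  induction h with
  | refl => exact he
  | tail _ hadj ih =>
    obtain ⟨h1, h2, h3 | h3⟩ := hadj
    · exact (exit_of_edge N h3 h1 h2).1 ih
    · exact (exit_of_edge N h3 h2 h1).2 ih

/-! ### tops of tree components -/

lemma top_exists {u : V} (hu : N.isTreeN u) :
    ∃ t, ReflTransGen N.treeE t u ∧ N.isTreeN t ∧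
      (t = N.root ∨ ∃ p, N.E p t ∧ ¬ N.isTreeN p) := by
  induction u using (wf_above N).induction with
  | _ u ih =>
    by_cases hur : u = N.root
    · exact ⟨u, ReflTransGen.refl, hu, Or.inl hur⟩
    · have hin : indeg N.E u = 1 := by
        rcases hu with rfl | ⟨h1, _⟩
        · exact absurd rfl hur
        · exact h1
      obtain ⟨q, hq⟩ := nonroot_has_parent N hur
      by_cases hqt : N.isTreeN q
      · obtain ⟨t, h1, h2, h3⟩ := ih q (TransGen.single hq) hqt
        exact ⟨t, h1.tail ⟨hq, hqt, hu⟩, h2, h3⟩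
      · exact ⟨u, ReflTransGen.refl, hu, Or.inr ⟨q, hq, hqt⟩⟩

lemma top_reaches {t : V} (ht : N.isTreeN t)
    (htop : t = N.root ∨ ∃ p, N.E p t ∧ ¬ N.isTreeN p) :
    ∀ m, ReflTransGen N.treeAdj t m → ReflTransGen N.treeE t m := by
  intro m hm
  induction hm with
  | refl => exact ReflTransGen.refl
  | @tail b c hb hadj ih =>
    obtain ⟨hb1, hc1, he | he⟩ := hadj
    · exact ih.tail ⟨he, hb1, hc1⟩
    -- he : N.E c b, i.e. c is the (tree) parent of b; goal: reach t c
    · by_cases hbt : b = t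
      · subst hbt
        rcases htop with rfl | ⟨p, hp1, hp2⟩
        · exact absurd he (no_parent_of_indeg_zero (by rw [N.root_indeg]))
        · have hbroot : b ≠ N.root := by
            intro h; rw [h] at hp1
            exact (no_parent_of_indeg_zero (by rw [N.root_indeg])) hp1
          have hin : indeg N.E b = 1 := by
            rcases ht with rfl | ⟨h1, _⟩
            · exact absurd rfl hbroot
            · exact h1
          exact absurd (parent_unique hin he hp1 ▸ hc1) hp2
      · have hbroot : b ≠ N.root := by
          rintro rfl
          exact (no_parent_of_indeg_zero (by rw [N.root_indeg])) he
        have hin : indeg N.E b = 1 := by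
          rcases hb1 with rfl | ⟨h1, _⟩
          · exact absurd rfl hbroot
          · exact h1
        rcases ih.cases_tail with h1 | ⟨q', hq', hq'b⟩
        · exact absurd h1 hbt
        · rw [parent_unique hin he hq'b.1]
          exact hq'
end Stmt15Aux
namespace Stmt15Aux

open Relation RPN

set_option linter.unusedSectionVars false
set_option maxHeartbeats 1000000

variable {V : Type*} [Fintype V] (N : RPN V)

/-! ### avoiding reachability -/

/-- reachability avoiding the node `p` -/
def Av (p a b : V) : Prop := ReflTransGen (fun x y => N.E x y ∧ y ≠ p) a b

lemma av_path {p a b : V} (h : Av N p a b) (ha : a ≠ p) :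
    ∃ l, IsDirPathE N.E a b l ∧ p ∉ l := by
  unfold Av at h
  induction h using Relation.ReflTransGen.head_induction_on with
  | refl =>
    exact ⟨[b], ⟨rfl, rfl, List.isChain_singleton b⟩, by
      simp only [List.mem_singleton]; exact fun hh => ha hh.symm⟩
  | head hstep htail ih =>
    rename_i x m
    obtain ⟨l, ⟨h1, h2, h3⟩, h4⟩ := ih hstep.2.symm.symm
    · refine ⟨x :: l, ⟨rfl, ?_, ?_⟩, ?_⟩
      · have hln : l ≠ [] := by rintro rfl; simp at h1
        obtain ⟨hd, tl, rfl⟩ := List.exists_cons_of_ne_nil hln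
        rw [List.getLast?_cons_cons]
        exact h2
      · rw [List.Chain', List.isChain_cons]
        refine ⟨fun y hy => ?_, h3⟩
        rw [h1] at hy
        cases hy
        exact hstep.1
      · simp only [List.mem_cons, not_or]
        exact ⟨fun hh => ha hh.symm, h4⟩

lemma not_dominates_of_av {p b : V} (h : Av N p N.root b) (hrp : N.root ≠ p)
    (hd : N.Dominates p b) : False := by
  obtain ⟨l, hl, hp⟩ := av_path N h hrp
  exact hp (hd l hl)

lemma av_or_reach {p v : V} (h : ReflTransGen N.E N.root v) :
    Av N p N.root v ∨ ReflTransGen N.E p v := by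
  induction h with
  | refl => exact Or.inl ReflTransGen.refl
  | @tail b c _ hbc ih =>
    rcases ih with ih | ih
    · by_cases hcp : c = p
      · exact Or.inr (hcp ▸ ReflTransGen.refl)
      · exact Or.inl (ih.tail ⟨hbc, hcp⟩)
    · exact Or.inr (ih.tail hbc)

lemma av_of_not_reach {p a b : V} (h : ReflTransGen N.E a b)
    (hp : ¬ ReflTransGen N.E a p) : Av N p a b := by
  induction h with
  | refl => exact ReflTransGen.refl
  | @tail b c hab hbc ih =>
    refine ih.tail ⟨hbc, ?_⟩
    rintro rfl
    exact hp (hab.tail hbc)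

lemma av_chain {p z c : V} (h : Exit N z c)
    (hm : ∀ m, N.isRetic m → Exit N m c → m ≠ p) (hc : c ≠ p) : Av N p z c := by
  obtain ⟨r, hch, hrc, hcnr⟩ := h
  induction hch using Relation.ReflTransGen.head_induction_on with
  | refl => exact ReflTransGen.single ⟨hrc, hc⟩
  | head hstep htail ih =>
    rename_i x m
    exact ReflTransGen.head ⟨hstep.1, hm m hstep.2.2 ⟨r, htail, hrc, hcnr⟩⟩ ih

/-! ### descending through exits -/

/-- `c` is an exit of a child component of `A` -/
def ExC (A : Set V) (c : V) : Prop :=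
  ∃ x y, x ∈ A ∧ N.E x y ∧ y ∉ A ∧ Exit N y c

lemma claim {A : Set V} {t : V} (ht : t ∈ A)
    (h3 : ∀ x ∈ A, ∀ y, N.E x y → y ∉ A → N.isRetic y) :
    ∀ w, ReflTransGen N.E t w → w ∉ A →
      (¬ N.isRetic w → ∃ c, ExC N A c ∧ ReflTransGen N.E c w) ∧
      (N.isRetic w → ∃ c c₂, ExC N A c ∧ Exit N w c₂ ∧ ReflTransGen N.E c c₂) := by
  intro w hw
  induction hw with
  | refl => exact fun hh => absurd ht hh
  | @tail q w hq hqw ih =>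
    intro hwA
    by_cases hqA : q ∈ A
    · have hwr : N.isRetic w := h3 q hqA w hqw hwA
      refine ⟨fun hnr => absurd hwr hnr, fun _ => ?_⟩
      obtain ⟨c₂, he⟩ := exit_exists N hwr
      exact ⟨c₂, c₂, ⟨q, w, hqA, hqw, hwA, he⟩, he, ReflTransGen.refl⟩
    · have ihq := ih hqA
      by_cases hqr : N.isRetic q
      · obtain ⟨c, c₂, hexc, hqexit, hcc₂⟩ := ihq.2 hqr
        have htl := exit_tail N hqr hqw hqexit
        constructor
        · intro hwnr
          exact ⟨c, hexc, (htl.1 hwnr) ▸ hcc₂⟩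
        · intro hwr
          exact ⟨c, c₂, hexc, htl.2 hwr, hcc₂⟩
      · obtain ⟨c, hexc, hcq⟩ := ihq.1 hqr
        constructor
        · intro _
          exact ⟨c, hexc, hcq.tail hqw⟩
        · intro hwr
          obtain ⟨c₂, he⟩ := exit_exists N hwr
          exact ⟨c, c₂, hexc, he, (hcq.tail hqw).trans (exit_reach N he)⟩

end Stmt15Aux
namespace Stmt15Aux

open Relation RPN

set_option linter.unusedSectionVars false
set_option maxHeartbeats 1000000

variable {V : Type*} [Fintype V] (N : RPN V)

lemma external_parent {A : Set V}
    (hAcomp : ∀ x ∈ A, N.comp x = A) (hAnr : ∀ x ∈ A, ¬ N.isRetic x)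
    (hcon : ∀ B, N.compE A B → 1 < Set.ncard {C | N.compE C B})
    {x y : V} (hx : x ∈ A) (hxy : N.E x y) (hyA : y ∉ A) (hyr : N.isRetic y) :
    ∃ w z, N.E w z ∧ z ∈ N.reticComp y ∧ w ∉ A ∧ ¬ N.isRetic w := by
  have hBy : N.comp y = N.reticComp y := comp_of_retic N hyr
  have hAB : A ≠ N.comp y := by
    intro h
    have : x ∈ N.comp y := h ▸ hx
    rw [hBy] at this
    exact hAnr x hx (mem_reticComp_retic N hyr this)
  have hcompAB : N.compE A (N.comp y) := ⟨hAB, x, y, hxy, hAcomp x hx, rfl⟩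
  have h2 := hcon _ hcompAB
  obtain ⟨C1, C2, hC1, hC2, hC12⟩ := (Set.one_lt_ncard_iff (Set.toFinite _)).1 h2
  have hpick : ∃ C, N.compE C (N.comp y) ∧ C ≠ A := by
    by_cases h : C1 = A
    · exact ⟨C2, hC2, fun hh => hC12 (h.trans hh.symm)⟩
    · exact ⟨C1, hC1, h⟩
  obtain ⟨C, ⟨hCB, w, z, hwz, hcw, hcz⟩, hCA⟩ := hpick
  have hzB : z ∈ N.comp y := by rw [← hcz]; exact mem_comp_self N z
  rw [hBy] at hzB
  have hzr : N.isRetic z := mem_reticComp_retic N hyr hzB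
  refine ⟨w, z, hwz, hzB, ?_, ?_⟩
  · intro hwA
    exact hCA (by rw [← hcw, hAcomp w hwA])
  · intro hwr
    apply hCB
    rw [← hcw, ← hcz, comp_of_retic N hwr, comp_of_retic N hzr]
    exact reticComp_eq N (ReflTransGen.single ⟨hzr, hwr, Or.inr hwz⟩)

lemma case_root {A : Set V} {t : V} (ht : t ∈ A) (hroot : t = N.root)
    (hAnr : ∀ x ∈ A, ¬ N.isRetic x)
    (hAcomp : ∀ x ∈ A, N.comp x = A)
    (h3 : ∀ x ∈ A, ∀ y, N.E x y → y ∉ A → N.isRetic y)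
    (hcon : ∀ B, N.compE A B → 1 < Set.ncard {C | N.compE C B})
    (hex : ∃ x ∈ A, ∃ y, N.E x y ∧ y ∉ A) : False := by
  have key : ∀ c, ¬ ExC N A c := by
    intro c
    induction c using (wf_above N).induction with
    | _ c ih =>
      rintro ⟨x, y, hxA, hxy, hyA, hyex⟩
      have hyr : N.isRetic y := h3 x hxA y hxy hyA
      obtain ⟨w, z, hwz, hzR, hwA, hwnr⟩ :=
        external_parent N hAcomp hAnr hcon hxA hxy hyA hyr
      have hzex : Exit N z c := exit_invariant N hzR hyex
      have htw : ReflTransGen N.E t w := hroot ▸ N.reachable w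
      obtain ⟨c', hExC', hc'w⟩ := (claim N ht h3 w htw hwA).1 hwnr
      have htg : TransGen N.E c' c :=
        TransGen.trans_right hc'w (TransGen.head' hwz (exit_reach N hzex))
      exact ih c' htg hExC'
  obtain ⟨x, hxA, y, hxy, hyA⟩ := hex
  obtain ⟨c0, hc0⟩ := exit_exists N (h3 x hxA y hxy hyA)
  exact key c0 ⟨x, y, hxA, hxy, hyA, hc0⟩

end Stmt15Aux
namespace Stmt15Aux

open Relation RPN

set_option linter.unusedSectionVars false
set_option maxHeartbeats 1000000

variable {V : Type*} [Fintype V] (N : RPN V)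

lemma case_p {A : Set V} {t p ℓ : V} (ht : t ∈ A)
    (hAt : ∀ x ∈ A, ReflTransGen N.E t x)
    (hAnr : ∀ x ∈ A, ¬ N.isRetic x)
    (hAcomp : ∀ x ∈ A, N.comp x = A)
    (h3 : ∀ x ∈ A, ∀ y, N.E x y → y ∉ A → N.isRetic y)
    (hp : p = t ∨ (N.E p t ∧ ∀ m, N.E p m → m = t))
    (hrp : N.root ≠ p)
    (hdom : N.Dominates p ℓ)
    (hleaf : N.isLeaf ℓ)
    (hℓA : ℓ ∉ A)
    (hcon : ∀ B, N.compE A B → 1 < Set.ncard {C | N.compE C B}) : False := by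
  classical
  have hreach_pt : ReflTransGen N.E p t := by
    rcases hp with rfl | ⟨h1, _⟩
    · exact ReflTransGen.refl
    · exact ReflTransGen.single h1
  -- facts about exits of child components
  have hF1 : ∀ c, ExC N A c → TransGen N.E t c := by
    rintro c ⟨x, y, hxA, hxy, hyA, hex⟩
    exact TransGen.trans_right (hAt x hxA) (TransGen.head' hxy (exit_reach N hex))
  have hF2 : ∀ c, ExC N A c → c ≠ p := by
    intro c hc hcp
    exact N.acyclic t (TransGen.trans_left (hF1 c hc) (hcp.symm ▸ hreach_pt))
  have hF3 : ∀ c, ExC N A c → ∀ m, N.isRetic m → Exit N m c → m ≠ p := by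
    intro c hc m hmr hmex hmp
    rcases hp with hpt' | ⟨hpt, huniq⟩
    · exact hAnr t ht (by rw [← hpt', ← hmp]; exact hmr)
    · obtain ⟨r, hch, hrc, hcnr⟩ := hmex
      rcases hch.cases_head with heq | ⟨m', hmm', hm'r⟩
      · have hct : c = t := huniq c (by rw [← hmp, heq]; exact hrc)
        exact N.acyclic t (hct ▸ hF1 c hc)
      · have hm't : m' = t := huniq m' (by rw [← hmp]; exact hmm'.1)
        exact hAnr t ht (hm't ▸ hmm'.2.2)
  have hF4 : ∀ c, ExC N A c → ¬ ReflTransGen N.E c p := by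
    intro c hc hcp
    exact N.acyclic t (TransGen.trans_left (hF1 c hc) (hcp.trans hreach_pt))
  -- from `reach p v`, `v ≠ p` get `reach t v`
  have hpt_step : ∀ v, v ≠ p → ReflTransGen N.E p v → ReflTransGen N.E t v := by
    intro v hvp hpv
    rcases hp with rfl | ⟨_, huniq⟩
    · exact hpv
    · rcases hpv.cases_head with rfl | ⟨m, hpm, hmv⟩
      · exact absurd rfl hvp
      · exact (huniq m hpm) ▸ hmv
  -- the main well-founded recursion
  have key : ∀ v, ¬ (¬ Av N p N.root v ∧ ∃ c, ExC N A c ∧ ReflTransGen N.E c v) := by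
    intro v
    induction v using (wf_above N).induction with
    | _ v ih =>
      rintro ⟨hnav, c, hExC, hcv⟩
      obtain ⟨x, y, hxA, hxy, hyA, hyex⟩ := hExC
      have hyr : N.isRetic y := h3 x hxA y hxy hyA
      obtain ⟨w, z, hwz, hzR, hwA, hwnr⟩ :=
        external_parent N hAcomp hAnr hcon hxA hxy hyA hyr
      have hzr : N.isRetic z := mem_reticComp_retic N hyr hzR
      have hzex : Exit N z c := exit_invariant N hzR hyex
      have hExC' : ExC N A c := ⟨x, y, hxA, hxy, hyA, hyex⟩
      have hzp : z ≠ p := hF3 c hExC' z hzr hzex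
      by_cases haw : Av N p N.root w
      · have havzc : Av N p z c := av_chain N hzex (hF3 c hExC') (hF2 c hExC')
        have havcv : Av N p c v := av_of_not_reach N hcv (hF4 c hExC')
        exact hnav (((haw.tail ⟨hwz, hzp⟩).trans havzc).trans havcv)
      · have hpw : ReflTransGen N.E p w := (av_or_reach N (N.reachable w)).resolve_left haw
        have hwp : w ≠ p := by
          intro hwp
          rcases hp with hpt' | ⟨_, huniq⟩
          · exact hwA (by rw [hwp, hpt']; exact ht)
          · exact hAnr t ht ((huniq z (by rw [← hwp]; exact hwz)) ▸ hzr)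
        have htw : ReflTransGen N.E t w := hpt_step w hwp hpw
        obtain ⟨c', hExC'', hc'w⟩ := (claim N ht h3 w htw hwA).1 hwnr
        have htg : TransGen N.E w v :=
          TransGen.trans_left (TransGen.head' hwz (exit_reach N hzex)) hcv
        exact ih w htg ⟨haw, c', hExC'', hc'w⟩
  -- apply it to the leaf ℓ
  have hnavℓ : ¬ Av N p N.root ℓ := fun hav => not_dominates_of_av N hav hrp hdom
  have hpℓ : ReflTransGen N.E p ℓ := (av_or_reach N (N.reachable ℓ)).resolve_left hnavℓ
  have hℓp : ℓ ≠ p := by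
    intro hℓp
    rcases hp with hpt' | ⟨hpt, _⟩
    · exact hℓA (by rw [hℓp, hpt']; exact ht)
    · exact no_child_of_outdeg_zero hleaf.2 (by rw [hℓp]; exact hpt)
  have htℓ : ReflTransGen N.E t ℓ := hpt_step ℓ hℓp hpℓ
  obtain ⟨c, hExC, hcℓ⟩ := (claim N ht h3 ℓ htℓ hℓA).1 (leaf_not_retic N hleaf)
  exact key ℓ ⟨hnavℓ, c, hExC, hcℓ⟩

end Stmt15Aux
namespace Stmt15Aux

open Relation RPN

set_option linter.unusedSectionVars false
set_option maxHeartbeats 1000000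

variable {V : Type*} [Fintype V] (N : RPN V)

lemma good_child {x y : V} (hxy : N.E x y) (hnr : ¬ N.isRetic y)
    (hne : N.comp y ≠ N.comp x) :
    N.compE (N.comp x) (N.comp y) ∧ Set.ncard {C | N.compE C (N.comp y)} ≤ 1 := by
  have hcompE : N.compE (N.comp x) (N.comp y) :=
    ⟨fun h => hne h.symm, x, y, hxy, rfl, rfl⟩
  refine ⟨hcompE, ?_⟩
  have hyroot : y ≠ N.root := fun h =>
    (no_parent_of_indeg_zero (show indeg N.E y = 0 by rw [h, N.root_indeg])) hxy
  have hin : indeg N.E y = 1 := indeg_one_of_not_retic N hyroot hnr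
  have hsub : {C | N.compE C (N.comp y)} ⊆ {N.comp x} := by
    rintro C ⟨hCB, w, z, hwz, hcw, hcz⟩
    by_cases htree : N.isTreeN y
    · have hBy : N.comp y = N.treeComp y := comp_of_tree N htree
      have hzB : z ∈ N.treeComp y := by rw [← hBy, ← hcz]; exact mem_comp_self N z
      have hztree : N.isTreeN z := mem_treeComp_tree N htree hzB
      have hwnt : ¬ N.isTreeN w := by
        intro hwt
        apply hCB
        rw [← hcw, ← hcz, comp_of_tree N hwt, comp_of_tree N hztree]
        exact treeComp_eq N (ReflTransGen.single ⟨hztree, hwt, Or.inr hwz⟩)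
      have hxnt : ¬ N.isTreeN x := by
        intro hxt
        apply hne
        rw [comp_of_tree N hxt, comp_of_tree N htree]
        exact treeComp_eq N (ReflTransGen.single ⟨hxt, htree, Or.inl hxy⟩)
      have htreach := top_reaches N htree (Or.inr ⟨x, hxy, hxnt⟩) z hzB
      have hzy : z = y := by
        rcases htreach.cases_tail with h1 | ⟨q', hq', hq'z⟩
        · exact h1
        · have hzroot : z ≠ N.root := fun h =>
            (no_parent_of_indeg_zero (show indeg N.E z = 0 by rw [h, N.root_indeg])) hwz
          have hinz : indeg N.E z = 1 := by
            rcases hztree with h1 | ⟨h1, _⟩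
            · exact absurd h1 hzroot
            · exact h1
          exact absurd ((parent_unique hinz hq'z.1 hwz) ▸ hq'z.2.1) hwnt
      have hwy : N.E w y := hzy ▸ hwz
      have hwx : w = x := parent_unique hin hwy hxy
      show C = N.comp x
      rw [← hcw, hwx]
    · have hBy : N.comp y = {y} := comp_of_other N htree hnr
      have hzy : z = y := by
        have : z ∈ ({y} : Set V) := by rw [← hBy, ← hcz]; exact mem_comp_self N z
        exact this
      have hwy : N.E w y := hzy ▸ hwz
      have hwx : w = x := parent_unique hin hwy hxy
      show C = N.comp x
      rw [← hcw, hwx]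
  calc Set.ncard {C | N.compE C (N.comp y)}
      ≤ Set.ncard ({N.comp x} : Set (Set V)) :=
        Set.ncard_le_ncard hsub (Set.toFinite _)
    _ = 1 := Set.ncard_singleton _

end Stmt15Aux

/-- The compression of a reticulation-visible network is tree-child: every
non-leaf node of the compression has a child that is not a reticulate node of the
compression. -/
theorem stmt15 [Fintype V] (N : RPN V)
    (hrv : ∀ v, (N.isRetic v ∨ N.isRedund v) → N.Visible v) :
    ∀ A ∈ Set.range N.comp, (∃ B, N.compE A B) →
      ∃ B, N.compE A B ∧ Set.ncard {C | N.compE C B} ≤ 1 := by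
  classical
  open Stmt15Aux in
  intro A _ hex
  by_contra hcon'
  push_neg at hcon'
  have hcon : ∀ B, N.compE A B → 1 < Set.ncard {C | N.compE C B} := by
    intro B hB
    have := hcon' B hB
    omega
  obtain ⟨B0, hne0, u0, v0, huv, hcu, hcv⟩ := hex
  by_cases hgood : ∃ x y, N.E x y ∧ N.comp x = A ∧ N.comp y ≠ A ∧ ¬ N.isRetic y
  · obtain ⟨x, y, hxy, hcx, hcyA, hynr⟩ := hgood
    have hgc := good_child N hxy hynr (by rw [hcx]; exact hcyA)
    rw [hcx] at hgc
    have h2 := hcon _ hgc.1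
    have h3 := hgc.2
    omega
  · push_neg at hgood
    have hcvA : N.comp v0 ≠ A := by rw [hcv]; exact hne0.symm
    have hv0r : N.isRetic v0 := hgood u0 v0 huv hcu hcvA
    have hu0nr : ¬ N.isRetic u0 := by
      intro hr
      apply hcvA
      rw [← hcu, comp_of_retic N hr, comp_of_retic N hv0r]
      exact reticComp_eq N (ReflTransGen.single ⟨hr, hv0r, Or.inl huv⟩)
    have hcompy_ne : ∀ y : V, y ∉ A → N.comp y ≠ A := by
      intro y hyA h
      exact hyA (h ▸ mem_comp_self N y)
    by_cases htr : N.isTreeN u0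
    · -- `A` is a tree component
      have hAeq : A = N.treeComp u0 := by rw [← hcu, comp_of_tree N htr]
      obtain ⟨t, htu, htt, htop⟩ := top_exists N htr
      have htA : t ∈ N.treeComp u0 :=
        (fun h => by haveI : Std.Symm N.treeAdj := ⟨fun a b h => treeAdj_symm N h⟩; exact Std.Symm.symm _ _ h : ReflTransGen N.treeAdj t u0 → ReflTransGen N.treeAdj u0 t)
          (ReflTransGen.mono (fun a b hab => ⟨hab.2.1, hab.2.2, Or.inl hab.1⟩) _ _ htu)
      have hmem : ∀ x, x ∈ A → x ∈ N.treeComp u0 := fun x hx => by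
        rw [← hAeq]; exact hx
      have ht' : t ∈ A := by rw [hAeq]; exact htA
      have hAt : ∀ x ∈ A, ReflTransGen N.E t x := by
        intro x hx
        have hx' : x ∈ N.treeComp t := by
          rw [treeComp_eq N htA]; exact hmem x hx
        exact ReflTransGen.mono (fun a b hab => hab.1) _ _ (top_reaches N htt htop x hx')
      have hAnr : ∀ x ∈ A, ¬ N.isRetic x := fun x hx hr =>
        retic_not_tree N hr (mem_treeComp_tree N htr (hmem x hx))
      have hAcomp : ∀ x ∈ A, N.comp x = A := by
        intro x hx
        rw [comp_eq_of_mem_treeComp N htr (hmem x hx), ← hAeq]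
      have h3 : ∀ x ∈ A, ∀ y, N.E x y → y ∉ A → N.isRetic y := by
        intro x hx y hxy hyA
        exact hgood x y hxy (hAcomp x hx) (hcompy_ne y hyA)
      have hu0A : u0 ∈ A := by rw [hAeq]; exact ReflTransGen.refl
      have hv0A : v0 ∉ A := fun h => hcvA (hAcomp v0 h)
      by_cases htroot : t = N.root
      · exact case_root N ht' htroot hAnr hAcomp h3 hcon ⟨u0, hu0A, v0, huv, hv0A⟩
      · rcases htop with htroot' | ⟨p, hpt, hpnt⟩
        · exact htroot htroot'
        · have hproot : p ≠ N.root := fun h => hpnt (by rw [h]; exact root_tree N)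
          have houtp : outdeg N.E p = 1 := by
            rcases N.degree_cond p hproot with hin | hout
            · have h2 : ¬ (2 ≤ outdeg N.E p) := fun h2 => hpnt (Or.inr ⟨hin, h2⟩)
              have h1 := outdeg_pos hpt
              omega
            · exact hout
          have hvis : N.Visible p := by
            by_cases hpr : N.isRetic p
            · exact hrv p (Or.inl hpr)
            · exact hrv p (Or.inr ⟨indeg_one_of_not_retic N hproot hpr, houtp⟩)
          obtain ⟨ℓ, hleaf, hdom⟩ := hvis
          have hℓA : ℓ ∉ A := fun h =>
            leaf_not_tree N hleaf (mem_treeComp_tree N htr (hmem ℓ h))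
          exact case_p N ht' hAt hAnr hAcomp h3
            (Or.inr ⟨hpt, fun m hm => child_unique houtp hm hpt⟩)
            (Ne.symm hproot) hdom hleaf hℓA hcon
    · -- `A` is a single redundant node
      have hu0root : u0 ≠ N.root := fun h => htr (by rw [h]; exact root_tree N)
      have hAeq : A = {u0} := by rw [← hcu, comp_of_other N htr hu0nr]
      have h1in : indeg N.E u0 = 1 := indeg_one_of_not_retic N hu0root hu0nr
      have hout : outdeg N.E u0 = 1 := by
        have h1 := outdeg_pos huv
        have h2 : ¬ (2 ≤ outdeg N.E u0) := fun h2 => htr (Or.inr ⟨h1in, h2⟩)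
        omega
      obtain ⟨ℓ, hleaf, hdom⟩ := hrv u0 (Or.inr ⟨h1in, hout⟩)
      have ht' : u0 ∈ A := by rw [hAeq]; exact rfl
      have hmem : ∀ x, x ∈ A → x = u0 := fun x hx => by
        rw [hAeq] at hx; exact hx
      have hAcomp : ∀ x ∈ A, N.comp x = A := by
        intro x hx
        rw [hmem x hx, comp_of_other N htr hu0nr, ← hAeq]
      refine case_p N (t := u0) (p := u0) ht' ?_ ?_ hAcomp ?_ (Or.inl rfl)
        (Ne.symm hu0root) hdom hleaf ?_ hcon
      · intro x hx; rw [hmem x hx]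
      · intro x hx; rw [hmem x hx]; exact hu0nr
      · intro x hx y hxy hyA
        exact hgood x y hxy (hAcomp x hx) (hcompy_ne y hyA)
      · intro h
        exact no_child_of_outdeg_zero hleaf.2 ((hmem ℓ h) ▸ huv)
end

section
/- In a binary galled network, every reticulate node is inner: all of its parents belong to the same tree-node component. -/
open Relation

variable {V : Type*}

private lemma chain'_transGen_aux {E : V → V → Prop} :
    ∀ (l : List V) (a b : V), List.Chain' E (a :: l) → b ∈ l → Relation.TransGen E a b := by
  intro l
  induction l with
  | nil => intro a b _ h; simp at h
  | cons c l' ih =>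
    intro a b hc hb
    rw [List.Chain', List.isChain_cons_cons] at hc
    rcases List.mem_cons.mp hb with rfl | hb
    · exact Relation.TransGen.single hc.1
    · exact Relation.TransGen.head hc.1 (ih c b hc.2 hb)

private lemma path_penult [Fintype V] (N : RPN V) :
    ∀ (p : List V) (w r : V), p.head? = some w → p.getLast? = some r →
      p.Chain' N.E → w ≠ r → (∀ x ∈ p, x ≠ r → N.isTreeN x) →
      ∃ z, N.E z r ∧ Relation.ReflTransGen N.treeAdj w z ∧
        ((z = w ∧ p = [w, r]) ∨ z ∈ p.tail.dropLast) := by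
  intro p
  induction p with
  | nil => intro w r h; simp at h
  | cons a l ih =>
    intro w r hh hl hc hwr htree
    have haw : a = w := by simpa using hh
    subst haw
    cases l with
    | nil =>
      exfalso; apply hwr; simpa using hl
    | cons b l' =>
      rw [List.Chain', List.isChain_cons_cons] at hc
      by_cases hbr : b = r
      · subst hbr
        cases l' with
        | nil => exact ⟨a, hc.1, Relation.ReflTransGen.refl, Or.inl ⟨rfl, rfl⟩⟩
        | cons c l'' =>
          exfalso
          have hl' : (c :: l'').getLast? = some b := by
            rw [List.getLast?_cons_cons, List.getLast?_cons_cons] at hl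
            exact hl
          have hmem : b ∈ c :: l'' := by
            obtain ⟨h1, h2⟩ := List.mem_getLast?_eq_getLast (l := c :: l'') hl'
            exact h2 ▸ List.getLast_mem h1
          exact N.acyclic b (chain'_transGen_aux (c :: l'') b b hc.2 hmem)
      · have hl' : (b :: l').getLast? = some r := by
          rw [List.getLast?_cons_cons] at hl; exact hl
        have htree' : ∀ x ∈ b :: l', x ≠ r → N.isTreeN x := fun x hx =>
          htree x (List.mem_cons_of_mem _ hx)
        obtain ⟨z, hz1, hz2, hz3⟩ := ih b r rfl hl' hc.2 hbr htree'
        have hta : N.isTreeN a := htree a List.mem_cons_self hwr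
        have htb : N.isTreeN b :=
          htree b (List.mem_cons_of_mem _ List.mem_cons_self) hbr
        have hstep : Relation.ReflTransGen N.treeAdj a z :=
          Relation.ReflTransGen.head ⟨hta, htb, Or.inl hc.1⟩ hz2
        refine ⟨z, hz1, hstep, Or.inr ?_⟩
        rcases hz3 with ⟨rfl, heq⟩ | hmem
        · -- b :: l' = [b, r], so l' = [r]
          have : l' = [r] := by simpa using heq
          subst this
          simp
        · -- z ∈ (b :: l').tail.dropLast = l'.dropLast
          simp only [List.tail_cons] at hmem ⊢
          cases l' with
          | nil => simp at hmem
          | cons c l'' =>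
            exact List.mem_cons_of_mem _ hmem

private lemma treeComp_eq_of_reach [Fintype V] (N : RPN V) {a b : V}
    (h : Relation.ReflTransGen N.treeAdj a b) : N.treeComp a = N.treeComp b := by
  have hsymm : Symmetric N.treeAdj := fun x y ⟨h1, h2, h3⟩ => ⟨h2, h1, h3.symm⟩
  have hs : Symmetric (Relation.ReflTransGen N.treeAdj) :=
    by haveI : Std.Symm N.treeAdj := ⟨hsymm⟩; exact fun x y h => Relation.ReflTransGen.symmetric.symm x y h
  ext v
  constructor
  · intro hv; exact Relation.ReflTransGen.trans (hs h) hv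
  · intro hv; exact Relation.ReflTransGen.trans h hv

/-- In a binary galled network, every reticulate node is inner: all of its
parents are tree nodes lying in the same tree-node component. -/
theorem stmt16 [Fintype V] (N : RPN V) (hbin : N.Binary) (hgal : N.Galled) :
    ∀ r, N.isRetic r → ∀ u v, N.E u r → N.E v r →
      N.isTreeN u ∧ N.isTreeN v ∧ N.treeComp u = N.treeComp v := by
  intro r hr u v hu hv
  obtain ⟨w, p, q, hw, hp, hq, hpq, hdisj, hptree, hqtree⟩ := hgal r hr
  -- r is not a tree node, so w ≠ r
  have hrnt : ¬ N.isTreeN r := by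
    rintro (rfl | ⟨h1, _⟩)
    · rw [RPN.isRetic, N.root_indeg] at hr; omega
    · rw [RPN.isRetic, h1] at hr; omega
  have hwr : w ≠ r := fun h => hrnt (h ▸ hw)
  obtain ⟨zp, hzp1, hzp2, hzp3⟩ := path_penult N p w r hp.1 hp.2.1 hp.2.2 hwr hptree
  obtain ⟨zq, hzq1, hzq2, hzq3⟩ := path_penult N q w r hq.1 hq.2.1 hq.2.2 hwr hqtree
  -- parents of r are not r itself
  have hzpr : zp ≠ r := fun h => N.acyclic r (Relation.TransGen.single (h ▸ hzp1))
  have hzqr : zq ≠ r := fun h => N.acyclic r (Relation.TransGen.single (h ▸ hzq1))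
  -- zp and zq are tree nodes
  have hmemp : ∀ x ∈ p.tail.dropLast, x ∈ p := fun x hx =>
    (List.tail_sublist p).subset ((List.dropLast_sublist _).subset hx)
  have hmemq : ∀ x ∈ q.tail.dropLast, x ∈ q := fun x hx =>
    (List.tail_sublist q).subset ((List.dropLast_sublist _).subset hx)
  have hzpt : N.isTreeN zp := by
    rcases hzp3 with ⟨rfl, _⟩ | hm
    · exact hw
    · exact hptree zp (hmemp zp hm) hzpr
  have hzqt : N.isTreeN zq := by
    rcases hzq3 with ⟨rfl, _⟩ | hm
    · exact hw
    · exact hqtree zq (hmemq zq hm) hzqr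
  -- a head-occurrence in the tail would give a cycle
  have hcycq : zq ∉ q.tail.dropLast ∨ zq ≠ w := by
    by_cases h : zq = w
    · left
      intro hm
      cases q with
      | nil => simp at hm
      | cons a t =>
        have ha : a = zq := by rw [h]; simpa using hq.1
        have hmt : zq ∈ t := (List.dropLast_sublist t).subset (by simpa using hm)
        exact N.acyclic zq (chain'_transGen_aux t zq zq (ha ▸ hq.2.2) hmt)
    · exact Or.inr h
  have hcycp : zp ∉ p.tail.dropLast ∨ zp ≠ w := by
    by_cases h : zp = w
    · left
      intro hm
      cases p with
      | nil => simp at hm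
      | cons a t =>
        have ha : a = zp := by rw [h]; simpa using hp.1
        have hmt : zp ∈ t := (List.dropLast_sublist t).subset (by simpa using hm)
        exact N.acyclic zp (chain'_transGen_aux t zp zp (ha ▸ hp.2.2) hmt)
    · exact Or.inr h
  -- zp ≠ zq
  have hne : zp ≠ zq := by
    intro h
    subst h
    rcases hzp3 with ⟨hzpw, hpeq⟩ | hmp
    · rcases hzq3 with ⟨hzqw, hqeq⟩ | hmq
      · exact hpq (hpeq.trans hqeq.symm)
      · rcases hcycq with hc | hc
        · exact hc hmq
        · exact hc hzpw
    · rcases hzq3 with ⟨hzqw, hqeq⟩ | hmq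
      · rcases hcycp with hc | hc
        · exact hc hmp
        · exact hc hzqw
      · exact hdisj zp hmp hmq
  -- the parents of r are exactly {zp, zq}
  have hcard : Set.ncard {x | N.E x r} = 2 := hbin.1 r hr
  have hsub : ({zp, zq} : Set V) ⊆ {x | N.E x r} := by
    rintro x (rfl | rfl)
    · exact hzp1
    · exact hzq1
  have hpair : ({zp, zq} : Set V).ncard = 2 := Set.ncard_pair hne
  have heq : ({zp, zq} : Set V) = {x | N.E x r} :=
    Set.eq_of_subset_of_ncard_le hsub (by rw [hcard, hpair]) (Set.toFinite _)
  have hparent : ∀ x, N.E x r → x = zp ∨ x = zq := by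
    intro x hx
    have : x ∈ ({zp, zq} : Set V) := heq ▸ hx
    simpa using this
  -- components
  have hcp : N.treeComp zp = N.treeComp w := (treeComp_eq_of_reach N hzp2).symm
  have hcq : N.treeComp zq = N.treeComp w := (treeComp_eq_of_reach N hzq2).symm
  have key : ∀ x, N.E x r → N.isTreeN x ∧ N.treeComp x = N.treeComp w := by
    intro x hx
    rcases hparent x hx with rfl | rfl
    · exact ⟨hzpt, hcp⟩
    · exact ⟨hzqt, hcq⟩
  obtain ⟨hu1, hu2⟩ := key u hu
  obtain ⟨hv1, hv2⟩ := key v hv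
  exact ⟨hu1, hv1, hu2.trans hv2.symm⟩
end
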